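/- Let ν ≥ 2 be an integer, let j ∈ ℕ satisfy 2^j ≥ 2ν, let m ∈ {2^j − ν, …, 2^j − 1}, set k := 2^j − 1 − m ∈ {0, …, ν−1}, and let φ_k^right ∈ L²(ℝ) vanish almost everywhere outside [−k−ν, 0]. Define the right boundary function φ^bd_{j,m} : [0,1] → ℝ by φ^bd_{j,m}(x) = 2^{j/2} φ_k^right(2^j (x − 1)). Then for every n ∈ ℕ: ∫₀¹ φ^bd_{j,m}(x) w_n(x) dx = Σ_{l=m−2^j−ν+1}^{−1} 2^{−j/2} w_n((l + 2^j)/2^j) · ∫₀¹ φ_k^right(x+l) w_{⌊n/2^j⌋}(x) dx. -/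

import Mathlib

open MeasureTheory

/-- `natDigit n i` is the `i`-th binary digit `n^(i)` (for `i ≥ 1`) of `n ∈ ℕ`,
so that `n = Σ_{i ≥ 1} n^(i) 2^(i-1)`. -/
def natDigit (n i : ℕ) : ℕ := (n / 2 ^ (i - 1)) % 2

/-- `dyadicDigit x i` is the `i`-th dyadic digit `x^(i) = ⌊2^i x⌋ − 2⌊2^(i−1) x⌋`
(for `i ≥ 1`) of `x ∈ [0,1)`. -/
noncomputable def dyadicDigit (x : ℝ) (i : ℕ) : ℤ :=
  ⌊(2 : ℝ) ^ i * x⌋ - 2 * ⌊(2 : ℝ) ^ (i - 1) * x⌋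

/-- The sequency-ordered Walsh function
`w_n(x) = (−1)^{Σ_{i≥1} (n^(i) + n^(i+1)) x^(i)}`; the sum is finite since
`n^(i) = 0` for `i > n`, so it may be truncated at `i = n + 1`. -/
noncomputable def walsh (n : ℕ) (x : ℝ) : ℝ :=
  (-1 : ℝ) ^ ∑ i ∈ Finset.Icc 1 (n + 1),
    (natDigit n i + natDigit n (i + 1)) * (dyadicDigit x i).toNat

/-- The dyadic XOR `x ⊕ y := Σ_{i≥1} |x^(i) − y^(i)| 2^{−i}` of `x, y ∈ [0,1)`. -/
noncomputable def dyadicXor (x y : ℝ) : ℝ :=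
  ∑' i : ℕ, |(dyadicDigit x (i + 1) : ℝ) - (dyadicDigit y (i + 1) : ℝ)| / 2 ^ (i + 1)

lemma natDigit_eq_zero {n i : ℕ} (h : n < 2 ^ (i - 1)) : natDigit n i = 0 := by
  simp [natDigit, Nat.div_eq_of_lt h]

lemma natDigit_eq_zero_of_lt {n i : ℕ} (h : n < i) : natDigit n i = 0 := by
  apply natDigit_eq_zero
  have := Nat.lt_two_pow_self (n := i - 1)
  omega

lemma dyadicDigit_zero (i : ℕ) : dyadicDigit 0 i = 0 := by simp [dyadicDigit]

lemma walsh_sum_ext (n N : ℕ) (hN : n + 1 ≤ N) (x : ℝ) :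
    walsh n x = (-1 : ℝ) ^ ∑ i ∈ Finset.Icc 1 N,
      (natDigit n i + natDigit n (i + 1)) * (dyadicDigit x i).toNat := by
  unfold walsh
  congr 1
  apply Finset.sum_subset
  · exact Finset.Icc_subset_Icc_right hN
  · intro i hi hni
    simp only [Finset.mem_Icc] at hi hni
    have h1 : n + 1 < i := by omega
    have d1 : natDigit n i = 0 := natDigit_eq_zero_of_lt (by omega)
    have d2 : natDigit n (i + 1) = 0 := natDigit_eq_zero_of_lt (by omega)
    simp [d1, d2]

lemma floor_add_div_pow (p s : ℕ) (x : ℝ) (hx0 : 0 ≤ x) (hx1 : x < 1) :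
    ⌊((p : ℝ) + x) / 2 ^ s⌋ = ((p / 2 ^ s : ℕ) : ℤ) := by
  have h0 : (0 : ℝ) ≤ ((p : ℝ) + x) / 2 ^ s := by positivity
  rw [← Int.natCast_floor_eq_floor h0]
  congr 1
  have : ((2 : ℝ) ^ s) = ((2 ^ s : ℕ) : ℝ) := by push_cast; ring
  rw [this, Nat.floor_div_natCast]
  congr 1
  rw [add_comm, Nat.floor_add_natCast hx0, Nat.floor_eq_zero.mpr hx1, zero_add]

lemma digit_low (j p : ℕ) (x : ℝ) (hx0 : 0 ≤ x) (hx1 : x < 1) (i : ℕ)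
    (hi1 : 1 ≤ i) (hij : i ≤ j) :
    dyadicDigit (((p : ℝ) + x) / 2 ^ j) i = (natDigit p (j - i + 1) : ℤ) := by
  have e1 : (2 : ℝ) ^ i * (((p : ℝ) + x) / 2 ^ j) = ((p : ℝ) + x) / 2 ^ (j - i) := by
    have : (2 : ℝ) ^ j = 2 ^ (j - i) * 2 ^ i := by
      rw [← pow_add]; congr 1; omega
    rw [this]; field_simp
  have e2 : (2 : ℝ) ^ (i - 1) * (((p : ℝ) + x) / 2 ^ j) = ((p : ℝ) + x) / 2 ^ (j - i + 1) := by
    have : (2 : ℝ) ^ j = 2 ^ (j - i + 1) * 2 ^ (i - 1) := by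
      rw [← pow_add]; congr 1; omega
    rw [this]; field_simp
  unfold dyadicDigit
  rw [e1, e2, floor_add_div_pow p _ x hx0 hx1, floor_add_div_pow p _ x hx0 hx1]
  have hdd : p / 2 ^ (j - i + 1) = p / 2 ^ (j - i) / 2 := by
    rw [Nat.div_div_eq_div_mul, pow_succ]
  unfold natDigit
  simp only [Nat.add_sub_cancel]
  rw [hdd]
  omega

lemma digit_high (j p : ℕ) (x : ℝ) (hx0 : 0 ≤ x) (i : ℕ) (hij : j < i) :
    dyadicDigit (((p : ℝ) + x) / 2 ^ j) i = dyadicDigit x (i - j) := by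
  have key : ∀ t : ℕ, (2 : ℝ) ^ (t + j) * (((p : ℝ) + x) / 2 ^ j) = ((2 ^ t * p : ℕ) : ℝ) + 2 ^ t * x := by
    intro t
    have h2j : (2 : ℝ) ^ j ≠ 0 := by positivity
    push_cast
    rw [pow_add]
    field_simp
  have keyf : ∀ t : ℕ, ⌊(2 : ℝ) ^ (t + j) * (((p : ℝ) + x) / 2 ^ j)⌋
      = ((2 ^ t * p : ℕ) : ℤ) + ⌊(2 : ℝ) ^ t * x⌋ := by
    intro t
    rw [key t]
    have : ((2 ^ t * p : ℕ) : ℝ) = (((2 ^ t * p : ℕ) : ℤ) : ℝ) := by push_cast; ring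
    rw [this, Int.floor_intCast_add]
  unfold dyadicDigit
  obtain ⟨s, hs1, rfl⟩ : ∃ s, 1 ≤ s ∧ i = s + j := ⟨i - j, by omega, by omega⟩
  have h1 : s + j - 1 = (s - 1) + j := by omega
  have h2 : s + j - j = s := by omega
  rw [h1, h2, keyf, keyf]
  have hpow : (2 ^ s * p : ℕ) = 2 * (2 ^ (s - 1) * p) := by
    have : 2 ^ s = 2 * 2 ^ (s - 1) := by rw [← pow_succ']; congr 1; omega
    rw [this]; ring
  push_cast [hpow]
  ring

lemma natDigit_div (n j i : ℕ) (hi : 1 ≤ i) : natDigit (n / 2 ^ j) i = natDigit n (j + i) := by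
  unfold natDigit
  have h : j + (i - 1) = j + i - 1 := by omega
  rw [Nat.div_div_eq_div_mul, ← pow_add, h]

lemma walsh_mul (j p n : ℕ) (hp : p < 2 ^ j) (x : ℝ) (hx0 : 0 ≤ x) (hx1 : x < 1) :
    walsh n (((p : ℝ) + x) / 2 ^ j) = walsh n ((p : ℝ) / 2 ^ j) * walsh (n / 2 ^ j) x := by
  set N := j + (n + 1) with hN
  -- sums as Ioc
  have hIcc : ∀ M : ℕ, Finset.Icc 1 M = Finset.Ioc 0 M := fun M => Finset.Icc_add_one_left_eq_Ioc 0 M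
  -- the three walsh functions, extended
  have h1 := walsh_sum_ext n N (by omega) (((p : ℝ) + x) / 2 ^ j)
  have h2 := walsh_sum_ext n N (by omega) (((p : ℝ) + 0) / 2 ^ j)
  have h3 := walsh_sum_ext (n / 2 ^ j) (n + 1) (by have := Nat.div_le_self n (2 ^ j); omega) x
  rw [hIcc] at h1 h2 h3
  -- split
  have hsplit : ∀ y : ℝ, ∑ i ∈ Finset.Ioc 0 N, (natDigit n i + natDigit n (i + 1)) * (dyadicDigit y i).toNat
      = (∑ i ∈ Finset.Ioc 0 j, (natDigit n i + natDigit n (i + 1)) * (dyadicDigit y i).toNat)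
      + ∑ i ∈ Finset.Ioc j N, (natDigit n i + natDigit n (i + 1)) * (dyadicDigit y i).toNat := by
    intro y
    rw [Finset.sum_Ioc_consecutive _ (Nat.zero_le j) (by omega)]
  -- low digits agree between x and 0
  have hlowagree : ∑ i ∈ Finset.Ioc 0 j, (natDigit n i + natDigit n (i + 1)) * (dyadicDigit (((p : ℝ) + x) / 2 ^ j) i).toNat
      = ∑ i ∈ Finset.Ioc 0 j, (natDigit n i + natDigit n (i + 1)) * (dyadicDigit (((p : ℝ) + 0) / 2 ^ j) i).toNat := by
    apply Finset.sum_congr rfl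
    intro i hi
    simp only [Finset.mem_Ioc] at hi
    rw [digit_low j p x hx0 hx1 i (by omega) hi.2,
        digit_low j p 0 le_rfl one_pos i (by omega) hi.2]
  -- high digits of p/2^j vanish
  have hhigh0 : ∑ i ∈ Finset.Ioc j N, (natDigit n i + natDigit n (i + 1)) * (dyadicDigit (((p : ℝ) + 0) / 2 ^ j) i).toNat = 0 := by
    apply Finset.sum_eq_zero
    intro i hi
    simp only [Finset.mem_Ioc] at hi
    rw [digit_high j p 0 le_rfl i hi.1, dyadicDigit_zero]
    simp
  -- high sum equals walsh (n / 2^j) x exponent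
  have hhigh : ∑ i ∈ Finset.Ioc j N, (natDigit n i + natDigit n (i + 1)) * (dyadicDigit (((p : ℝ) + x) / 2 ^ j) i).toNat
      = ∑ i ∈ Finset.Ioc 0 (n + 1), (natDigit (n / 2 ^ j) i + natDigit (n / 2 ^ j) (i + 1)) * (dyadicDigit x i).toNat := by
    have hmap : Finset.Ioc j N = (Finset.Ioc 0 (n + 1)).map (addLeftEmbedding j) := by
      rw [Finset.map_add_left_Ioc]
      congr 1 <;> omega
    rw [hmap, Finset.sum_map]
    apply Finset.sum_congr rfl
    intro i hi
    simp only [Finset.mem_Ioc] at hi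
    have he : addLeftEmbedding j i = j + i := rfl
    rw [he, digit_high j p x hx0 (j + i) (by omega),
        natDigit_div n j i (by omega), natDigit_div n j (i + 1) (by omega)]
    have : j + i - j = i := by omega
    rw [this]
    ring_nf
  rw [h1, h3, hsplit, hlowagree]
  have h2' : walsh n ((p : ℝ) / 2 ^ j)
      = (-1 : ℝ) ^ ∑ i ∈ Finset.Ioc 0 j, (natDigit n i + natDigit n (i + 1)) * (dyadicDigit (((p : ℝ) + 0) / 2 ^ j) i).toNat := by
    have hpe : ((p : ℝ) / 2 ^ j) = ((p : ℝ) + 0) / 2 ^ j := by ring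
    rw [hpe, h2, hsplit, hhigh0, Nat.add_zero]
  rw [h2', hhigh, pow_add]

lemma measurable_walsh (n : ℕ) : Measurable (walsh n) := by
  have hexp : Measurable fun x : ℝ => ∑ i ∈ Finset.Icc 1 (n + 1),
      (natDigit n i + natDigit n (i + 1)) * (dyadicDigit x i).toNat := by
    apply Finset.measurable_sum
    intro i _
    have h1 : Measurable fun x : ℝ => dyadicDigit x i := by
      unfold dyadicDigit
      exact (Int.measurable_floor.comp (measurable_id.const_mul _)).sub
        ((Int.measurable_floor.comp (measurable_id.const_mul _)).const_mul 2)
    exact ((measurable_from_top (f := Int.toNat)).comp h1).const_mul _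
  exact (measurable_from_top (f := fun e : ℕ => (-1 : ℝ) ^ e)).comp hexp

lemma abs_walsh (n : ℕ) (x : ℝ) : |walsh n x| = 1 := by
  unfold walsh
  rw [abs_pow, abs_neg, abs_one, one_pow]

lemma intervalIntegrable_mul_walsh (φ : ℝ → ℝ) (hL2 : MemLp φ 2 volume)
    (g : ℝ → ℝ) (hg : Measurable g) (hgb : ∀ x, |g x| ≤ 1) (a b : ℝ) :
    IntervalIntegrable (fun x => φ x * g x) volume a b := by
  rw [intervalIntegrable_iff]
  have hφ : IntegrableOn φ (Set.uIoc a b) volume := by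
    have h : Set.uIoc a b = Set.Ioc (a ⊓ b) (a ⊔ b) := rfl
    rw [h]
    exact (hL2.restrict _).integrable one_le_two
  have := hφ.mul_bdd (c := 1) (hg.aestronglyMeasurable.restrict)
    (Filter.Eventually.of_forall (fun x => by simpa using hgb x))
  exact this

/-- Right boundary scaling functions: for `ν ≥ 2`, `2^j ≥ 2ν`,
`2^j − ν ≤ m ≤ 2^j − 1`, `k := 2^j − 1 − m`, and `φ_k^right ∈ L²(ℝ)` supported in
`[−k−ν, 0]`, the Walsh coefficients of `φ^bd_{j,m}(x) = 2^{j/2} φ_k^right(2^j(x−1))`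
on `[0,1]` satisfy, for every `n ∈ ℕ`:
`∫₀¹ φ^bd_{j,m}(x) w_n(x) dx
  = Σ_{l=m−2^j−ν+1}^{−1} 2^{−j/2} w_n((l+2^j)/2^j) ∫₀¹ φ_k^right(x+l) w_{⌊n/2^j⌋}(x) dx`. -/
theorem walsh_boundary_right_edge (ν : ℕ) (hν : 2 ≤ ν) (j : ℕ) (hj : 2 * ν ≤ 2 ^ j)
    (m : ℕ) (hm1 : 2 ^ j ≤ m + ν) (hm2 : m < 2 ^ j) (k : ℕ) (hk : k = 2 ^ j - 1 - m)
    (φright : ℝ → ℝ) (hL2 : MemLp φright 2 volume)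
    (hsupp : ∀ᵐ x : ℝ, x ∉ Set.Icc (-(k : ℝ) - ν) 0 → φright x = 0) (n : ℕ) :
    ∫ x in (0 : ℝ)..1,
        ((2 : ℝ) ^ ((j : ℝ) / 2) * φright (2 ^ j * (x - 1))) * walsh n x =
      ∑ l ∈ Finset.Icc ((m : ℤ) - 2 ^ j - ν + 1) (-1 : ℤ),
        (2 : ℝ) ^ (-(j : ℝ) / 2) * walsh n (((l : ℝ) + 2 ^ j) / 2 ^ j) *
          ∫ x in (0 : ℝ)..1, φright (x + l) * walsh (n / 2 ^ j) x := by
  have hc0 : (0:ℝ) < (2:ℝ) ^ j := by positivity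
  have hcne : ((2:ℝ) ^ j) ≠ 0 := ne_of_gt hc0
  set c : ℝ := (2 : ℝ) ^ j with hc
  set F : ℝ → ℝ := fun y => φright y * walsh n ((y + 2 ^ j) / 2 ^ j) with hF
  have hkν : k + ν ≤ 2 ^ j := by omega
  set K := k + ν with hK
  set lo : ℝ := -(k:ℝ) - ν with hlo
  have hlo_eq : lo = -((K:ℕ):ℝ) := by rw [hlo, hK]; push_cast; ring
  have hcK : ((2 ^ j : ℕ) : ℝ) = c := by rw [hc]; push_cast; ring
  have hKc : ((K:ℕ):ℝ) ≤ c := by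
    rw [← hcK]; exact_mod_cast hkν
  -- integrability of F on any interval
  have hFint : ∀ a b : ℝ, IntervalIntegrable F volume a b := by
    intro a b
    exact intervalIntegrable_mul_walsh φright hL2 _
      ((measurable_walsh n).comp ((measurable_id.add_const _).div_const _))
      (fun x => le_of_eq (abs_walsh n _)) a b
  -- Step A : change of variables
  have hA1 : ∫ x in (0 : ℝ)..1, ((2 : ℝ) ^ ((j : ℝ) / 2) * φright (2 ^ j * (x - 1))) * walsh n x
      = ∫ x in (0 : ℝ)..1, (2 : ℝ) ^ ((j : ℝ) / 2) * F (c * x + -c) := by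
    apply intervalIntegral.integral_congr
    intro x _
    simp only [hF]
    have h1 : c * x + -c + 2 ^ j = 2 ^ j * x := by rw [hc]; ring
    have h2 : c * x + -c = 2 ^ j * (x - 1) := by rw [hc]; ring
    rw [h1, h2, mul_div_cancel_left₀ x hcne]
    ring
  have hA2 : ∫ x in (0 : ℝ)..1, (2 : ℝ) ^ ((j : ℝ) / 2) * F (c * x + -c)
      = (2 : ℝ) ^ ((j : ℝ) / 2) * (c⁻¹ * ∫ y in (-c)..(0:ℝ), F y) := by
    rw [intervalIntegral.integral_const_mul, intervalIntegral.integral_comp_mul_add F hcne (-c)]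
    norm_num
  -- Step B : split off the vanishing part
  have hsplit2 : ∫ y in (-c)..(0:ℝ), F y = (∫ y in (-c)..lo, F y) + ∫ y in lo..(0:ℝ), F y :=
    (intervalIntegral.integral_add_adjacent_intervals (hFint _ _) (hFint _ _)).symm
  have h2jz : ((2:ℤ) ^ j) = ((2 ^ j : ℕ) : ℤ) := by push_cast; ring
  have hkz : (k : ℤ) = 2 ^ j - 1 - m := by omega
  have hkR : (k : ℝ) = 2 ^ j - 1 - (m : ℝ) := by exact_mod_cast hkz
  have hne_lo : ∀ᵐ y : ℝ, y ≠ lo := by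
    rw [ae_iff]
    simp only [not_not, Set.setOf_eq_eq_singleton]
    exact Real.volume_singleton
  have hlec : -c ≤ lo := by rw [hlo_eq]; linarith
  have hzero : ∫ y in (-c)..lo, F y = 0 := by
    apply intervalIntegral.integral_zero_ae
    filter_upwards [hsupp, hne_lo] with y hy hy2 hmem
    rw [Set.uIoc_of_le hlec] at hmem
    have hnotin : y ∉ Set.Icc (-(k : ℝ) - ν) 0 := by
      simp only [Set.mem_Icc, not_and_or, not_le]
      left
      have : y < lo := lt_of_le_of_ne hmem.2 hy2
      rw [hlo] at this
      linarith
    simp only [hF]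
    rw [hy hnotin, zero_mul]
  -- Step D : split into unit intervals
  set b : ℕ → ℝ := fun i => lo + i with hb
  have hb0 : b 0 = lo := by simp [hb]
  have hbK : b K = 0 := by simp [hb, hlo_eq]
  have hD : ∑ i ∈ Finset.range K, ∫ y in (b i)..(b (i+1)), F y = ∫ y in lo..(0:ℝ), F y := by
    rw [intervalIntegral.sum_integral_adjacent_intervals (fun i _ => hFint _ _), hb0, hbK]
  -- Step E : evaluate each piece
  have hne_one : ∀ᵐ x : ℝ, x ≠ (1:ℝ) := by
    rw [ae_iff]
    simp only [not_not, Set.setOf_eq_eq_singleton]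
    exact Real.volume_singleton
  have hE : ∀ i : ℕ, i < K → (∫ y in (b i)..(b (i+1)), F y)
      = walsh n (((2 ^ j - K + i : ℕ) : ℝ) / 2 ^ j) *
          ∫ x in (0:ℝ)..1, φright (x + (lo + i)) * walsh (n / 2 ^ j) x := by
    intro i hi
    have hpi : ((2 ^ j - K + i : ℕ) : ℝ) = c + (lo + i) := by
      rw [hlo_eq, ← hcK]; push_cast [hkν]; ring
    have hcomp : ∫ y in (b i)..(b (i+1)), F y = ∫ x in (0:ℝ)..1, F (x + b i) := by
      rw [intervalIntegral.integral_comp_add_right F (b i)]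
      congr 1
      · rw [zero_add]
      · rw [hb]; push_cast; ring
    rw [hcomp]
    have hae : ∀ᵐ x : ℝ, x ∈ Set.uIoc (0:ℝ) 1 → F (x + b i)
        = walsh n (((2 ^ j - K + i : ℕ) : ℝ) / 2 ^ j) *
            (φright (x + (lo + i)) * walsh (n / 2 ^ j) x) := by
      filter_upwards [hne_one] with x hx1 hmem
      rw [Set.uIoc_of_le (by norm_num : (0:ℝ) ≤ 1)] at hmem
      have hx0 : (0:ℝ) ≤ x := le_of_lt hmem.1
      have hxlt : x < 1 := lt_of_le_of_ne hmem.2 hx1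
      have harg : (x + b i + 2 ^ j) / 2 ^ j = (((2 ^ j - K + i : ℕ) : ℝ) + x) / 2 ^ j := by
        rw [hpi, hb, hc]; ring_nf
      simp only [hF]
      rw [harg, walsh_mul j _ n (by omega) x hx0 hxlt]
      have hbi : b i = lo + i := rfl
      rw [hbi]; ring
    rw [intervalIntegral.integral_congr_ae hae, intervalIntegral.integral_const_mul]
  -- constant
  have hκ : (2 : ℝ) ^ ((j : ℝ) / 2) * c⁻¹ = (2 : ℝ) ^ (-(j : ℝ) / 2) := by
    rw [hc, ← Real.rpow_natCast 2 j, ← Real.rpow_neg_one, ← Real.rpow_mul (by norm_num),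
        ← Real.rpow_add (by norm_num)]
    congr 1
    ring
  -- assemble
  rw [hA1, hA2, hsplit2, hzero, zero_add, ← hD, Finset.mul_sum, Finset.mul_sum]
  apply Finset.sum_nbij' (fun i : ℕ => ((m : ℤ) - 2 ^ j - ν + 1) + i)
    (fun l : ℤ => (l - ((m : ℤ) - 2 ^ j - ν + 1)).toNat)
  · intro a ha
    simp only [Finset.mem_range] at ha
    simp only [Finset.mem_Icc]
    omega
  · intro l hl
    simp only [Finset.mem_Icc] at hl
    simp only [Finset.mem_range]
    omega
  · intro a _; omega
  · intro l hl
    simp only [Finset.mem_Icc] at hl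
    omega
  · intro i hi
    simp only [Finset.mem_range] at hi
    have hcast1 : ((((m : ℤ) - 2 ^ j - ν + 1) + i : ℤ) : ℝ) = lo + i := by
      rw [hlo]
      push_cast
      rw [hkR]
      ring
    have hcast2 : ((((m : ℤ) - 2 ^ j - ν + 1) + i : ℤ) : ℝ) + 2 ^ j = ((2 ^ j - K + i : ℕ) : ℝ) := by
      rw [hcast1]
      have hpi : ((2 ^ j - K + i : ℕ) : ℝ) = c + (lo + i) := by
        rw [hlo_eq, ← hcK]; push_cast [hkν]; ring
      rw [hpi, hc]; ring
    rw [hE i hi, hcast2, ← hcast1]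
    rw [← hκ, hc]
    ring
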